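/- Delaying a first-passage time by g steps transforms the restart sequence as follows. Let g ∈ ℕ and define the delayed PMF ũ by ũ(n) = 0 for n < g and ũ(n) = u(n−g) for n ≥ g (whose mean is μ + g). Then its restart sequence S̃ satisfies: S̃(n) = n + 1 for all n < g, and S̃(n) = S(n−g) + g·(1 − U(n−g)) for all n ≥ g. Consequently, if S(n) ≥ 0 for all n then S̃(n) ≥ 0 for all n: if u does not permit beneficial restart, neither does its delay. -/
import Mathlib


theorem delayed_restart_sequence
    (u : ℕ → ℝ) (hu0 : ∀ n, 0 ≤ u n) (hu1 : ∑' n, u n = 1)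
    (hmean : Summable (fun n : ℕ => (n : ℝ) * u n))
    (μ : ℝ) (hμ : μ = ∑' n : ℕ, (n : ℝ) * u n)
    (U S : ℕ → ℝ)
    (hU : ∀ n, U n = ∑ k ∈ Finset.range (n + 1), u k)
    (hS : ∀ n, S n = ∑ k ∈ Finset.range (n + 1), (1 - U k - u k * μ))
    (g : ℕ)
    (v : ℕ → ℝ) (hv : ∀ n, v n = if n < g then 0 else u (n - g))
    (V T : ℕ → ℝ)
    (hV : ∀ n, V n = ∑ k ∈ Finset.range (n + 1), v k)
    (hT : ∀ n, T n = ∑ k ∈ Finset.range (n + 1), (1 - V k - v k * (μ + g))) :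
    (∀ n, n < g → T n = (n : ℝ) + 1) ∧
    (∀ n, g ≤ n → T n = S (n - g) + (g : ℝ) * (1 - U (n - g))) ∧
    ((∀ n, 0 ≤ S n) → ∀ n, 0 ≤ T n) := by
  -- small values of v vanish
  have hv0 : ∀ k, k < g → v k = 0 := by
    intro k hk; rw [hv]; simp [hk]
  have hvg : ∀ m : ℕ, v (g + m) = u m := by
    intro m; rw [hv]; simp
  have hV0 : ∀ k, k < g → V k = 0 := by
    intro k hk
    rw [hV]
    apply Finset.sum_eq_zero
    intro i hi
    exact hv0 i (lt_of_lt_of_le (Finset.mem_range.mp hi) hk)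
  have h1 : ∀ n, n < g → T n = (n : ℝ) + 1 := by
    intro n hn
    rw [hT]
    have : ∀ k ∈ Finset.range (n + 1), (1 : ℝ) - V k - v k * (μ + g) = 1 := by
      intro k hk
      have hk' : k < g := lt_of_lt_of_le (Finset.mem_range.mp hk) hn
      rw [hV0 k hk', hv0 k hk']; ring
    rw [Finset.sum_congr rfl this]
    simp
  -- V (g + m) = U m
  have hVU : ∀ m : ℕ, V (g + m) = U m := by
    intro m
    induction m with
    | zero =>
      rw [hV, hU]
      rw [Finset.sum_range_succ]
      have : ∑ k ∈ Finset.range g, v k = 0 :=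
        Finset.sum_eq_zero fun i hi => hv0 i (Finset.mem_range.mp hi)
      simpa [this] using hvg 0
    | succ m ih =>
      have e1 : g + (m + 1) = (g + m) + 1 := by ring
      have hUs : U (m + 1) = U m + u (m + 1) := by
        rw [hU (m + 1), Finset.sum_range_succ, ← hU]
      rw [e1, hV, Finset.sum_range_succ, ← hV, ih, hUs]
      rw [show g + m + 1 = g + (m + 1) by ring, hvg (m + 1)]
  have h2' : ∀ m : ℕ, T (g + m) = S m + (g : ℝ) * (1 - U m) := by
    intro m
    induction m with
    | zero =>
      rw [hT, Finset.sum_range_succ]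
      have hc : ∀ k ∈ Finset.range g, (1 : ℝ) - V k - v k * (μ + g) = 1 := by
        intro k hk
        have hk' : k < g := Finset.mem_range.mp hk
        rw [hV0 k hk', hv0 k hk']; ring
      rw [Finset.sum_congr rfl hc, Finset.sum_const, Finset.card_range]
      have hV0' : V (g + 0) = U 0 := hVU 0
      rw [show g + 0 = g from rfl] at hV0'
      rw [hV0']
      have hvg0 : v g = u 0 := by simpa using hvg 0
      have hS0 : S 0 = 1 - U 0 - u 0 * μ := by rw [hS]; simp
      have hU0 : U 0 = u 0 := by rw [hU]; simp
      rw [hvg0, hS0, hU0]; ring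
    | succ m ih =>
      have e1 : g + (m + 1) = (g + m) + 1 := by ring
      rw [e1, hT, Finset.sum_range_succ, ← hT, ih]
      rw [show g + m + 1 = g + (m + 1) by ring, hVU (m + 1), hvg (m + 1)]
      rw [hS (m + 1), Finset.sum_range_succ, ← hS]
      have hUs : U (m + 1) = U m + u (m + 1) := by
        rw [hU (m + 1), Finset.sum_range_succ, ← hU]
      rw [hUs]; ring
  have h2 : ∀ n, g ≤ n → T n = S (n - g) + (g : ℝ) * (1 - U (n - g)) := by
    intro n hn
    have := h2' (n - g)
    rwa [Nat.add_sub_cancel' hn] at this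
  refine ⟨h1, h2, ?_⟩
  intro hSpos n
  rcases lt_or_ge n g with hn | hn
  · rw [h1 n hn]; positivity
  · rw [h2 n hn]
    have hsum : Summable u := by
      by_contra h
      rw [tsum_eq_zero_of_not_summable h] at hu1
      norm_num at hu1
    have hU1 : U (n - g) ≤ 1 := by
      rw [hU, ← hu1]
      exact Summable.sum_le_tsum (Finset.range (n - g + 1)) (fun i _ => hu0 i) hsum
    have : (0 : ℝ) ≤ (g : ℝ) * (1 - U (n - g)) := by
      apply mul_nonneg (by positivity); linarith
    linarith [hSpos (n - g)]
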